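/- Let G be a subgroup of S_d and let A, B be nonsingular matrices in Z^{d×d}. Then A ≃_G B if and only if H(A) ≃_G H(B), and also if and only if H(A) = H(B·g) for some g ∈ G, where H denotes Hermite normal form. -/

import Mathlib

def IsHNF {n : ℕ} (H : Matrix (Fin n) (Fin n) ℤ) : Prop :=
  (∀ i j : Fin n, j < i → H i j = 0) ∧
  (∀ i : Fin n, 0 < H i i) ∧
  (∀ i j : Fin n, i < j → 0 ≤ H i j ∧ H i j < H j j)

def IsHNFOf {n : ℕ} (H A : Matrix (Fin n) (Fin n) ℤ) : Prop :=
  IsHNF H ∧ ∃ U : Matrix (Fin n) (Fin n) ℤ, IsUnit U.det ∧ U * A = H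

def GRel {n : ℕ} (G : Subgroup (Equiv.Perm (Fin n)))
    (A B : Matrix (Fin n) (Fin n) ℤ) : Prop :=
  ∃ U : Matrix (Fin n) (Fin n) ℤ, IsUnit U.det ∧ ∃ g ∈ G, U * A = B.submatrix id ⇑g

lemma mul_submatrix_perm {n : ℕ} (X Y : Matrix (Fin n) (Fin n) ℤ)
    (g : Equiv.Perm (Fin n)) :
    (X * Y).submatrix id ⇑g = X * Y.submatrix id ⇑g := by
  ext i j
  simp [Matrix.mul_apply]

lemma inv_det_isUnit {n : ℕ} (U : Matrix (Fin n) (Fin n) ℤ) (h : IsUnit U.det) :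
    IsUnit (U⁻¹).det := by
  have h1 : (U⁻¹).det * U.det = 1 := by
    rw [← Matrix.det_mul, Matrix.nonsing_inv_mul _ h, Matrix.det_one]
  exact IsUnit.of_mul_eq_one _ h1

/-- `A ≃_G B` iff `H(A) ≃_G H(B)` iff `H(A) = H(B ⋅ g)` for some `g ∈ G`. -/
theorem stmt10 {d : ℕ} (G : Subgroup (Equiv.Perm (Fin d)))
    (A B HA HB : Matrix (Fin d) (Fin d) ℤ)
    (hA : A.det ≠ 0) (hB : B.det ≠ 0)
    (hHA : IsHNFOf HA A) (hHB : IsHNFOf HB B) :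
    (GRel G A B ↔ GRel G HA HB) ∧
    (GRel G A B ↔ ∃ g ∈ G, IsHNFOf HA (B.submatrix id ⇑g)) := by
  obtain ⟨hnfA, UA, hUA, hUAA⟩ := hHA
  obtain ⟨hnfB, UB, hUB, hUBB⟩ := hHB
  constructor
  · constructor
    · rintro ⟨U, hU, g, hg, hUAB⟩
      refine ⟨UB * U * UA⁻¹, ?_, g, hg, ?_⟩
      · simp only [Matrix.det_mul]
        exact (hUB.mul hU).mul (inv_det_isUnit UA hUA)
      · have : UB * U * UA⁻¹ * HA = UB * U * A := by
          rw [← hUAA, Matrix.mul_assoc (UB * U), ← Matrix.mul_assoc UA⁻¹,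
            Matrix.nonsing_inv_mul _ hUA, Matrix.one_mul]
        rw [this, Matrix.mul_assoc, hUAB, ← hUBB, mul_submatrix_perm]
    · rintro ⟨U, hU, g, hg, hUAB⟩
      refine ⟨UB⁻¹ * U * UA, ?_, g, hg, ?_⟩
      · simp only [Matrix.det_mul]
        exact ((inv_det_isUnit UB hUB).mul hU).mul hUA
      · have h1 : UB⁻¹ * U * UA * A = UB⁻¹ * U * HA := by
          rw [Matrix.mul_assoc (UB⁻¹ * U), hUAA]
        rw [h1, Matrix.mul_assoc, hUAB, ← hUBB, mul_submatrix_perm,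
          ← Matrix.mul_assoc, Matrix.nonsing_inv_mul _ hUB, Matrix.one_mul]
  · constructor
    · rintro ⟨U, hU, g, hg, hUAB⟩
      refine ⟨g, hg, hnfA, UA * U⁻¹, ?_, ?_⟩
      · simp only [Matrix.det_mul]
        exact hUA.mul (inv_det_isUnit U hU)
      · rw [← hUAB, ← hUAA, Matrix.mul_assoc, ← Matrix.mul_assoc U⁻¹,
          Matrix.nonsing_inv_mul _ hU, Matrix.one_mul]
    · rintro ⟨g, hg, _, W, hW, hWB⟩
      refine ⟨W⁻¹ * UA, ?_, g, hg, ?_⟩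
      · simp only [Matrix.det_mul]
        exact (inv_det_isUnit W hW).mul hUA
      · rw [Matrix.mul_assoc, hUAA, ← hWB, ← Matrix.mul_assoc,
          Matrix.nonsing_inv_mul _ hW, Matrix.one_mul]
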